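/- For all d ≥ 2 and all k ≥ 1, the optimal stretches satisfy Δ'_d(⌈k/2⌉) ≤ Δ_d(k) ≤ Δ'_d(k). -/

import Mathlib

open scoped BigOperators ENNReal

noncomputable section

/-- The projection `π : ℝ^d → ℝ^{d−1}` forgetting the last coordinate. -/
def proj {d : ℕ} (x : EuclideanSpace ℝ (Fin d)) : EuclideanSpace ℝ (Fin (d - 1)) :=
  WithLp.toLp 2 (fun i => x (Fin.castLE (Nat.sub_le d 1) i))

/-- The height `h(x) = x_d`, the last coordinate of `x ∈ ℝ^d` (junk value `0` for `d = 0`). -/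
def hCoord {d : ℕ} (x : EuclideanSpace ℝ (Fin d)) : ℝ :=
  if h : 0 < d then x ⟨d - 1, by omega⟩ else 0

/-- The first coordinate of `x ∈ ℝ^d` (junk value `0` for `d = 0`). -/
def firstCoord {d : ℕ} (x : EuclideanSpace ℝ (Fin d)) : ℝ :=
  if h : 0 < d then x ⟨0, h⟩ else 0

/-- A set `Q ⊆ ℝ^m` is in affinely general position if any `m+1` of its points are
affinely independent. -/
def AffGenPos {m : ℕ} (Q : Set (EuclideanSpace ℝ (Fin m))) : Prop :=
  ∀ s : Finset (EuclideanSpace ℝ (Fin m)), ↑s ⊆ Q → s.card = m + 1 →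
    AffineIndependent ℝ (fun x : s => (x : EuclideanSpace ℝ (Fin m)))

/-- A set `Q ⊆ ℝ^d` is convex independent if it is in general position and no point of `Q`
lies in the convex hull of the other points of `Q`. -/
def ConvIndep {d : ℕ} (Q : Set (EuclideanSpace ℝ (Fin d))) : Prop :=
  AffGenPos Q ∧ ∀ q ∈ Q, q ∉ convexHull ℝ (Q \ {q})

/-- A finite set `P ⊆ ℝ^d` is regular if (R1) the projection of `P` to each coordinate axis is
injective; (R2) `π(P)` is in affinely general position in `ℝ^{d−1}`; (R3) for every generic pair
`(S, T)` of `P` (disjoint nonempty subsets with `|S| + |T| = d + 1`), the affine spans of `π(S)`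
and `π(T)` intersect in exactly one point. -/
def Regular {d : ℕ} (P : Set (EuclideanSpace ℝ (Fin d))) : Prop :=
  (∀ i : Fin d, Set.InjOn (fun p : EuclideanSpace ℝ (Fin d) => p i) P) ∧
  AffGenPos (proj '' P) ∧
  (∀ S T : Finset (EuclideanSpace ℝ (Fin d)), ↑S ⊆ P → ↑T ⊆ P → Disjoint S T →
    S.Nonempty → T.Nonempty → S.card + T.card = d + 1 →
    ∃! q : EuclideanSpace ℝ (Fin (d - 1)),
      q ∈ affineSpan ℝ (proj '' (S : Set (EuclideanSpace ℝ (Fin d)))) ∧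
      q ∈ affineSpan ℝ (proj '' (T : Set (EuclideanSpace ℝ (Fin d)))))

/-- `A` is high above `B` if `A`, `B` are disjoint, `A ∪ B` is regular, and for every generic pair
`(S, T)` of `A ∪ B` with `S ⊆ A`, `T ⊆ B`, the points `s ∈ aff S`, `t ∈ aff T` with
`π(s) = π(t)` satisfy `h(s) > h(t)`. -/
def HighAbove {d : ℕ} (A B : Set (EuclideanSpace ℝ (Fin d))) : Prop :=
  Disjoint A B ∧ Regular (A ∪ B) ∧
  ∀ S T : Finset (EuclideanSpace ℝ (Fin d)), ↑S ⊆ A → ↑T ⊆ B →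
    S.Nonempty → T.Nonempty → S.card + T.card = d + 1 →
    ∀ s t : EuclideanSpace ℝ (Fin d),
      s ∈ affineSpan ℝ (S : Set (EuclideanSpace ℝ (Fin d))) →
      t ∈ affineSpan ℝ (T : Set (EuclideanSpace ℝ (Fin d))) →
      proj s = proj t → hCoord t < hCoord s

/-- A regular set `P ⊆ ℝ^d` is a convex cup if whenever `p, p₁, …, p_d ∈ P` are distinct points
with `π(p) = ∑ cᵢ π(pᵢ)`, all `cᵢ ∈ (0,1)` and `∑ cᵢ = 1`, then `h(p) < ∑ cᵢ h(pᵢ)`. -/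
def ConvexCup {d : ℕ} (P : Set (EuclideanSpace ℝ (Fin d))) : Prop :=
  Regular P ∧
  ∀ (p : EuclideanSpace ℝ (Fin d)) (q : Fin d → EuclideanSpace ℝ (Fin d)) (c : Fin d → ℝ),
    p ∈ P → (∀ i, q i ∈ P) → Function.Injective q → (∀ i, p ≠ q i) →
    (∀ i, c i ∈ Set.Ioo (0 : ℝ) 1) → ∑ i, c i = 1 →
    proj p = ∑ i, c i • proj (q i) →
    hCoord p < ∑ i, c i * hCoord (q i)

/-- A regular set `P ⊆ ℝ^d` is a convex cap if whenever `p, p₁, …, p_d ∈ P` are distinct points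
with `π(p) = ∑ cᵢ π(pᵢ)`, all `cᵢ ∈ (0,1)` and `∑ cᵢ = 1`, then `h(p) > ∑ cᵢ h(pᵢ)`. -/
def ConvexCap {d : ℕ} (P : Set (EuclideanSpace ℝ (Fin d))) : Prop :=
  Regular P ∧
  ∀ (p : EuclideanSpace ℝ (Fin d)) (q : Fin d → EuclideanSpace ℝ (Fin d)) (c : Fin d → ℝ),
    p ∈ P → (∀ i, q i ∈ P) → Function.Injective q → (∀ i, p ≠ q i) →
    (∀ i, c i ∈ Set.Ioo (0 : ℝ) 1) → ∑ i, c i = 1 →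
    proj p = ∑ i, c i • proj (q i) →
    ∑ i, c i * hCoord (q i) < hCoord p

/-- `∂_π P`, the set of points of `P` whose projection does not lie in the interior of the
convex hull of `π(P)`. -/
def piBoundary {d : ℕ} (P : Set (EuclideanSpace ℝ (Fin d))) : Set (EuclideanSpace ℝ (Fin d)) :=
  {p ∈ P | proj p ∉ interior (convexHull ℝ (proj '' P))}

/-- The rank of `p` in `P`: the number of points of `P` whose first coordinate is at most that
of `p`.  If `P` is sorted as `p₁, p₂, …` by strictly increasing first coordinate, then
`rank P pₜ = t`. -/
def rank {d : ℕ} (P : Set (EuclideanSpace ℝ (Fin d))) (p : EuclideanSpace ℝ (Fin d)) : ℕ :=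
  Set.ncard {q ∈ P | firstCoord q ≤ firstCoord p}

/-- The subset `P_{a,b} = {p_t ∈ P : t ≡ a (mod b)}` of `P` (sorted by first coordinate). -/
def modClass {d : ℕ} (a b : ℕ) (P : Set (EuclideanSpace ℝ (Fin d))) :
    Set (EuclideanSpace ℝ (Fin d)) :=
  {p ∈ P | rank P p % b = a % b}

/-- `d`-oscillators, defined recursively: (O1) any one-point set, and any finite subset of `ℝ¹`,
is an oscillator; (O2) for `d ≥ 2` a finite set `P` with `|P| ≥ 2` is a `d`-oscillator if it is
regular, both `P_{1,2}` and `P_{2,2}` are `d`-oscillators, one of `P_{1,2}`, `P_{2,2}` is high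
above the other, and `π(P)` is a `(d−1)`-oscillator. -/
inductive IsOscillator : (d : ℕ) → Set (EuclideanSpace ℝ (Fin d)) → Prop
  | single {d : ℕ} (p : EuclideanSpace ℝ (Fin d)) : IsOscillator d {p}
  | dimOne (P : Set (EuclideanSpace ℝ (Fin 1))) (hfin : P.Finite) : IsOscillator 1 P
  | step {d : ℕ} (P : Set (EuclideanSpace ℝ (Fin d))) (hd : 2 ≤ d) (hfin : P.Finite)
      (hcard : 2 ≤ P.ncard) (hreg : Regular P)
      (h1 : IsOscillator d (modClass 1 2 P))
      (h2 : IsOscillator d (modClass 2 2 P))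
      (hab : HighAbove (modClass 1 2 P) (modClass 2 2 P) ∨
        HighAbove (modClass 2 2 P) (modClass 1 2 P))
      (hproj : IsOscillator (d - 1) (proj '' P)) : IsOscillator d P

/-- A finite set `P ⊆ ℝ^d` is generic if for any disjoint nonempty subsets `S, T` of `P` with
`|S| + |T| = d + 2`, the affine spans of `S` and `T` intersect in exactly one point. -/
def GenericSet {d : ℕ} (P : Set (EuclideanSpace ℝ (Fin d))) : Prop :=
  ∀ S T : Finset (EuclideanSpace ℝ (Fin d)), ↑S ⊆ P → ↑T ⊆ P → Disjoint S T →
    S.Nonempty → T.Nonempty → S.card + T.card = d + 2 →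
    ∃! x : EuclideanSpace ℝ (Fin d),
      x ∈ affineSpan ℝ (S : Set (EuclideanSpace ℝ (Fin d))) ∧
      x ∈ affineSpan ℝ (T : Set (EuclideanSpace ℝ (Fin d)))

/-- The point of `ℝ^d` obtained from `y ∈ ℝ^{d−1}` by appending a last coordinate `t`. -/
def lift {d : ℕ} (y : EuclideanSpace ℝ (Fin (d - 1))) (t : ℝ) : EuclideanSpace ℝ (Fin d) :=
  WithLp.toLp 2 (fun i : Fin d => if h : (i : ℕ) < d - 1 then y ⟨i, h⟩ else t)

/-- `(N)_ε = ∑_{k≥0} a_k ε^{k+1}` where `N = ∑_{k≥0} a_k 2^k` is the binary expansion of `N`. -/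
def binRep (ε : ℝ) (N : ℕ) : ℝ :=
  ∑ k ∈ Finset.range (N + 1), if N.testBit k then ε ^ (k + 1) else 0

/-- The stretch `str_P(C) = i_k − i_1` of a subset `C` of a `d`-oscillator `P` (sorted by first
coordinate), where `i_1 < … < i_k` are the indices of the elements of `C` in `P`. -/
def stretch {d : ℕ} (P C : Set (EuclideanSpace ℝ (Fin d))) : ℕ :=
  sSup (rank P '' C) - sInf (rank P '' C)

/-- `Δ_d(k)`: the minimum stretch `str_P(C)` over all finite `d`-oscillators `P` and all
`k`-point convex independent subsets `C ⊆ P` (`= ∞` if there are none). -/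
def Delta (d k : ℕ) : ℝ≥0∞ :=
  sInf {s : ℝ≥0∞ | ∃ P C : Set (EuclideanSpace ℝ (Fin d)),
    IsOscillator d P ∧ C ⊆ P ∧ ConvIndep C ∧ C.ncard = k ∧ s = (stretch P C : ℝ≥0∞)}

/-- `Δ'_d(k)`: the minimum stretch `str_P(C)` over all finite `d`-oscillators `P` and all
`k`-point subsets `C ⊆ P` that are convex cups or convex caps (`= ∞` if there are none). -/
def Delta' (d k : ℕ) : ℝ≥0∞ :=
  sInf {s : ℝ≥0∞ | ∃ P C : Set (EuclideanSpace ℝ (Fin d)),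
    IsOscillator d P ∧ C ⊆ P ∧ (ConvexCup C ∨ ConvexCap C) ∧ C.ncard = k ∧
      s = (stretch P C : ℝ≥0∞)}

abbrev ES (d : ℕ) := EuclideanSpace ℝ (Fin d)

section helpers
variable {d : ℕ}

lemma proj_apply (x : ES d) (i : Fin (d-1)) : proj x i = x (Fin.castLE (Nat.sub_le d 1) i) := rfl

lemma proj_add (x y : ES d) : proj (x + y) = proj x + proj y := by
  ext i
  simp [proj_apply, PiLp.add_apply]

lemma proj_smul (c : ℝ) (x : ES d) : proj (c • x) = c • proj x := by
  ext i
  simp [proj_apply, PiLp.smul_apply]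

/-- proj as a linear map -/
def projL (d : ℕ) : ES d →ₗ[ℝ] ES (d-1) where
  toFun := proj
  map_add' := proj_add
  map_smul' := proj_smul

lemma projL_apply (x : ES d) : projL d x = proj x := rfl

lemma proj_sum {ι : Type*} (s : Finset ι) (f : ι → ES d) :
    proj (∑ i ∈ s, f i) = ∑ i ∈ s, proj (f i) := by
  rw [← projL_apply, map_sum]; rfl

lemma hCoord_eq (hd : 0 < d) (x : ES d) : hCoord x = x ⟨d-1, by omega⟩ := dif_pos hd

lemma hCoord_eq_proj' (hd : 0 < d) (x : ES d) :
    hCoord x = EuclideanSpace.proj (⟨d-1, by omega⟩ : Fin d) x := by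
  rw [hCoord_eq hd]; rfl

lemma hCoord_add (hd : 0 < d) (x y : ES d) : hCoord (x + y) = hCoord x + hCoord y := by
  simp [hCoord_eq hd, PiLp.add_apply]

lemma hCoord_smul (hd : 0 < d) (c : ℝ) (x : ES d) : hCoord (c • x) = c * hCoord x := by
  simp [hCoord_eq hd, PiLp.smul_apply]

lemma hCoord_sum (hd : 0 < d) {ι : Type*} (s : Finset ι) (f : ι → ES d) :
    hCoord (∑ i ∈ s, f i) = ∑ i ∈ s, hCoord (f i) := by
  simp only [hCoord_eq_proj' hd, map_sum]

lemma point_ext (hd : 2 ≤ d) {x y : ES d} (h1 : proj x = proj y) (h2 : hCoord x = hCoord y) :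
    x = y := by
  ext i
  rcases lt_or_ge (i : ℕ) (d-1) with h | h
  · have := congrArg (fun v : ES (d-1) => v ⟨i, h⟩) h1
    simpa [proj_apply] using this
  · have hi : i = (⟨d-1, by omega⟩ : Fin d) := by
      have h3 := i.isLt
      apply Fin.ext
      show (i : ℕ) = d - 1
      omega
    rw [hCoord_eq (by omega) x, hCoord_eq (by omega) y] at h2
    rw [hi]; exact h2

end helpers
section nodep
variable {d : ℕ}

/-- No nontrivial affine dependency among at most `n` points of `P`. -/
def NoDep {d : ℕ} (P : Set (ES d)) (n : ℕ) : Prop :=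
  ∀ s : Finset (ES d), ↑s ⊆ P → s.card ≤ n →
    ∀ w : ES d → ℝ, ∑ x ∈ s, w x = 0 → ∑ x ∈ s, w x • x = 0 → ∀ x ∈ s, w x = 0

lemma noDep_two {V : Type*} [AddCommGroup V] [Module ℝ V] (s : Finset V) (hc : s.card ≤ 2)
    (w : V → ℝ) (h0 : ∑ x ∈ s, w x = 0) (h1 : ∑ x ∈ s, w x • x = 0) : ∀ x ∈ s, w x = 0 := by
  classical
  intro x hx
  rcases Nat.lt_or_ge s.card 2 with h | h
  · have hs : s = {x} := by
      apply Finset.eq_singleton_iff_unique_mem.mpr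
      exact ⟨hx, fun y hy => Finset.card_le_one.mp (by omega) y hy x hx⟩
    subst hs
    simpa using h0
  · have hc2 : s.card = 2 := le_antisymm hc h
    obtain ⟨a, b, hab, hs2⟩ := Finset.card_eq_two.mp hc2
    rw [hs2] at hx
    rw [hs2, Finset.sum_pair hab] at h0 h1
    have hb : w b = - w a := by linarith
    have h2 : w a • (a - b) = 0 := by
      rw [smul_sub, sub_eq_zero]
      rw [hb] at h1
      have : w a • a = - (- w a • b) := by
        have := h1
        rw [add_eq_zero_iff_eq_neg] at this
        exact this
      rw [this, neg_smul, neg_neg]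
    have hwa : w a = 0 := by
      rcases smul_eq_zero.mp h2 with h' | h'
      · exact h'
      · exact absurd (sub_eq_zero.mp h') hab
    rcases Finset.mem_insert.mp hx with rfl | hxb
    · exact hwa
    · rw [Finset.mem_singleton.mp hxb, hb, hwa, neg_zero]

lemma indicator_weight {α β : Type*} [DecidableEq β] (v : Finset α) (f : α → β)
    (hf : ∀ a ∈ v, ∀ b ∈ v, f a = f b → a = b) (w : α → ℝ) :
    ∀ a ∈ v, (∑ x ∈ v, if f x = f a then w x else 0) = w a := by
  intro a ha
  rw [Finset.sum_eq_single_of_mem a ha]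
  · simp
  · intro b hb hba
    have : f b ≠ f a := fun hh => hba (hf b hb a ha hh)
    simp [this]

lemma affineIndependent_of_noDep {n : ℕ} {P : Set (ES d)} (h : NoDep P n)
    (s : Finset (ES d)) (hs : ↑s ⊆ P) (hc : s.card ≤ n) :
    AffineIndependent ℝ (fun x : s => (x : ES d)) := by
  classical
  rw [affineIndependent_iff]
  intro t w hw0 hws e het
  set W : ES d → ℝ := fun x => ∑ e ∈ t, if (e : ES d) = x then w e else 0 with hW
  have hWval : ∀ e ∈ t, W (e : ES d) = w e := by
    intro e he
    rw [hW]
    simp only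
    rw [Finset.sum_eq_single_of_mem e he]
    · simp
    · intro b hb hbe
      have : (b : ES d) ≠ (e : ES d) := fun hh => hbe (Subtype.ext hh)
      simp [this]
  have h1 : ∑ x ∈ s, W x = 0 := by
    have heq : ∑ x ∈ s, W x = ∑ e ∈ t, w e := by
      rw [hW]
      simp only
      rw [Finset.sum_comm]
      apply Finset.sum_congr rfl
      intro e he
      rw [Finset.sum_ite_eq s (e : ES d) (fun _ => w e)]
      simp [e.2]
    rw [heq]
    exact hw0
  have h2 : ∑ x ∈ s, W x • x = 0 := by
    rw [hW]
    simp only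
    have : ∀ x ∈ s, (∑ e ∈ t, if (e : ES d) = x then w e else 0) • x
        = ∑ e ∈ t, (if (e : ES d) = x then w e • x else 0) := by
      intro x _
      rw [Finset.sum_smul]
      apply Finset.sum_congr rfl
      intro e _
      split <;> simp
    have heq : ∑ x ∈ s, ∑ e ∈ t, (if (e : ES d) = x then w e • x else 0)
        = ∑ e ∈ t, w e • (e : ES d) := by
      rw [Finset.sum_comm]
      apply Finset.sum_congr rfl
      intro e he
      rw [Finset.sum_ite_eq s (e : ES d) (fun x => w e • x)]
      simp [e.2]
    rw [Finset.sum_congr rfl this, heq]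
    exact hws
  have := h s hs hc W h1 h2 (e : ES d) e.2
  rw [hWval e het] at this
  exact this

lemma proj_injOn (hd : 2 ≤ d) {P : Set (ES d)} (hreg : Regular P) : Set.InjOn proj P := by
  intro a ha b hb hab
  apply hreg.1 ⟨0, by omega⟩ ha hb
  have := congrArg (fun v : ES (d-1) => v ⟨0, by omega⟩) hab
  simpa [proj_apply] using this

lemma modClass_cover {P : Set (ES d)} {p : ES d} (hp : p ∈ P) :
    p ∈ modClass 1 2 P ∨ p ∈ modClass 2 2 P := by
  rcases Nat.mod_two_eq_zero_or_one (rank P p) with h | h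
  · right; exact ⟨hp, by simp [h]⟩
  · left; exact ⟨hp, by simp [h]⟩

lemma modClass_disj (P : Set (ES d)) : Disjoint (modClass 1 2 P) (modClass 2 2 P) := by
  rw [Set.disjoint_left]
  rintro p ⟨_, h1⟩ ⟨_, h2⟩
  omega

end nodep
section oscnodep
variable {d : ℕ}

/-- transfer a small dependency down through the projection -/
lemma proj_noDep {P : Set (ES d)} (hd : 2 ≤ d) (hinj : Set.InjOn proj P)
    (hpn : NoDep (proj '' P) d) :
    ∀ v : Finset (ES d), ↑v ⊆ P → v.card ≤ d → ∀ w : ES d → ℝ,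
      ∑ y ∈ v, w y = 0 → ∑ y ∈ v, w y • proj y = 0 → ∀ y ∈ v, w y = 0 := by
  classical
  intro v hv hvc w h0 h1 y hy
  set W : ES (d-1) → ℝ := fun z => ∑ x ∈ v, if proj x = z then w x else 0 with hW
  have hinjv : ∀ a ∈ v, ∀ b ∈ v, proj a = proj b → a = b :=
    fun a ha b hb => hinj (hv ha) (hv hb)
  have hWval : ∀ a ∈ v, W (proj a) = w a := indicator_weight v proj hinjv w
  have himg : ↑(v.image proj) ⊆ proj '' P := by
    intro z hz
    simp only [Finset.coe_image, Set.mem_image] at hz ⊢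
    obtain ⟨x, hx, rfl⟩ := hz
    exact ⟨x, hv hx, rfl⟩
  have hicard : (v.image proj).card ≤ d := le_trans (Finset.card_image_le) hvc
  have hS0 : ∑ z ∈ v.image proj, W z = 0 := by
    rw [Finset.sum_image hinjv]
    rw [← h0]
    exact Finset.sum_congr rfl fun a ha => hWval a ha
  have hS1 : ∑ z ∈ v.image proj, W z • z = 0 := by
    rw [Finset.sum_image hinjv]
    rw [← h1]
    exact Finset.sum_congr rfl fun a ha => by rw [hWval a ha]
  have := hpn (v.image proj) himg (by
      have : (d - 1) + 1 = d := by omega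
      omega) W hS0 hS1 (proj y) (Finset.mem_image_of_mem proj hy)
  rw [hWval y hy] at this
  exact this

lemma oscNoDep : ∀ {d : ℕ} {P : Set (ES d)}, IsOscillator d P → NoDep P (d+1) := by
  intro d P h
  induction h with
  | single p =>
    intro s hs hc w h0 h1 x hx
    have hc1 : s.card ≤ 2 := by
      have : s.card ≤ 1 := Finset.card_le_one.mpr (fun a ha b hb => by
        have ha' : a = p := hs ha
        have hb' : b = p := hs hb
        rw [ha', hb'])
      omega
    exact noDep_two s hc1 w h0 h1 x hx
  | dimOne P hfin =>
    intro s hs hc w h0 h1 x hx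
    exact noDep_two s hc w h0 h1 x hx
  | @step d P hd2 hfin hcard hreg h1 h2 hab hproj ih1 ih2 ihproj =>
    classical
    intro s hs hc w hw0 hws x hx
    by_contra hwx
    set u := s.filter (fun y => w y ≠ 0) with hu
    have hxu : x ∈ u := Finset.mem_filter.mpr ⟨hx, hwx⟩
    have hu_sub : ↑u ⊆ P := fun y hy => hs (Finset.filter_subset _ s hy)
    have hnz : ∀ y ∈ u, w y ≠ 0 := fun y hy => (Finset.mem_filter.mp hy).2
    have hw0u : ∑ y ∈ u, w y = 0 := by
      have heq : ∑ y ∈ u, w y = ∑ y ∈ s, w y := by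
        rw [hu, Finset.sum_filter]
        apply Finset.sum_congr rfl
        intro y _
        split
        · rfl
        · next h => rw [not_not.mp h]
      rw [heq, hw0]
    have hwsu : ∑ y ∈ u, w y • y = 0 := by
      have heq : ∑ y ∈ u, w y • y = ∑ y ∈ s, w y • y := by
        rw [hu, Finset.sum_filter]
        apply Finset.sum_congr rfl
        intro y _
        split
        · rfl
        · next h => rw [not_not.mp h, zero_smul]
      rw [heq, hws]
    have hprojsum : ∑ y ∈ u, w y • proj y = 0 := by
      have : ∑ y ∈ u, w y • proj y = proj (∑ y ∈ u, w y • y) := by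
        rw [proj_sum]
        exact Finset.sum_congr rfl fun y _ => (proj_smul _ _).symm
      rw [this, hwsu, ← projL_apply, map_zero]
    have hpn : NoDep (proj '' P) d := by
      have := ihproj
      have hh : (d - 1) + 1 = d := by omega
      rw [hh] at this
      exact this
    have hinj : Set.InjOn proj P := proj_injOn hd2 hreg
    have key := proj_noDep hd2 hinj hpn
    rcases Nat.lt_or_ge u.card (d+1) with hlt | hge
    · exact hnz x hxu (key u hu_sub (by omega) w hw0u hprojsum x hxu)
    · have hucard : u.card = d + 1 :=
        le_antisymm (le_trans (Finset.card_filter_le s _) hc) hge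
      set A := modClass 1 2 P with hA
      set B := modClass 2 2 P with hB
      set uA := u.filter (fun y => y ∈ A) with huA
      set uB := u.filter (fun y => y ∈ B) with huB
      have hBnotA : uB = u.filter (fun y => ¬ y ∈ A) := by
        ext y
        simp only [huB, Finset.mem_filter]
        constructor
        · rintro ⟨hyu, hyB⟩
          exact ⟨hyu, fun hyA => Set.disjoint_left.mp (modClass_disj P) hyA hyB⟩
        · rintro ⟨hyu, hyA⟩
          refine ⟨hyu, ?_⟩
          rcases modClass_cover (hu_sub hyu) with h | h
          · exact absurd h hyA
          · exact h
      have hsum_split : ∑ y ∈ uA, w y + ∑ y ∈ uB, w y = 0 := by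
        rw [huA, hBnotA, Finset.sum_filter_add_sum_filter_not]
        exact hw0u
      have hvec_split : ∑ y ∈ uA, w y • y + ∑ y ∈ uB, w y • y = 0 := by
        rw [huA, hBnotA, Finset.sum_filter_add_sum_filter_not]
        exact hwsu
      have hproj_split : ∑ y ∈ uA, w y • proj y + ∑ y ∈ uB, w y • proj y = 0 := by
        rw [huA, hBnotA, Finset.sum_filter_add_sum_filter_not]
        exact hprojsum
      have hcard_split : uA.card + uB.card = d + 1 := by
        rw [huA, hBnotA, Finset.card_filter_add_card_filter_not]
        exact hucard
      by_cases hA0 : uA.Nonempty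
      swap
      · -- u ⊆ B
        have husubB : ↑u ⊆ B := by
          intro y hy
          rcases modClass_cover (hu_sub hy) with hh | hh
          · exact absurd (Finset.mem_filter.mpr ⟨hy, hh⟩) (fun hc => hA0 ⟨y, hc⟩)
          · exact hh
        exact hnz x hxu (ih2 u husubB (by omega) w hw0u hwsu x hxu)
      by_cases hB0 : uB.Nonempty
      swap
      · have husubA : ↑u ⊆ A := by
          intro y hy
          rcases modClass_cover (hu_sub hy) with hh | hh
          · exact hh
          · exact absurd (Finset.mem_filter.mpr ⟨hy, hh⟩) (fun hc => hB0 ⟨y, hc⟩)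
        exact hnz x hxu (ih1 u husubA (by omega) w hw0u hwsu x hxu)
      -- both classes nonempty
      have huAsubA : ↑uA ⊆ A := fun y hy => (Finset.mem_filter.mp hy).2
      have huBsubB : ↑uB ⊆ B := fun y hy => (Finset.mem_filter.mp hy).2
      have hdisjAB : Disjoint uA uB := by
        rw [Finset.disjoint_left]
        intro y hyA hyB
        exact Set.disjoint_left.mp (modClass_disj P) (huAsubA hyA) (huBsubB hyB)
      set σ := ∑ y ∈ uA, w y with hσdef
      by_cases hσ : σ = 0
      · -- common direction case
        set v : ES (d-1) := ∑ y ∈ uA, w y • proj y with hvdef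
        by_cases hv : v = 0
        · have huAcard : uA.card ≤ d := by
            have := Finset.card_pos.mpr hB0
            omega
          obtain ⟨y, hy⟩ := hA0
          exact hnz y (Finset.filter_subset _ u hy)
            (key uA (fun z hz => hu_sub (Finset.filter_subset _ u hz)) huAcard w hσ hv y hy)
        · -- v ≠ 0 : contradict R3 uniqueness
          obtain ⟨q, ⟨hq1, hq2⟩, huniq⟩ := hreg.2.2 uA uB
            (fun z hz => hu_sub (Finset.filter_subset _ u hz))
            (fun z hz => hu_sub (Finset.filter_subset _ u hz))
            hdisjAB hA0 hB0 hcard_split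
          have hvA : v ∈ vectorSpan ℝ (proj '' (↑uA : Set (ES d))) := by
            have hrange : Set.range (fun y : ↥uA => proj (y : ES d))
                = proj '' (↑uA : Set (ES d)) := by
              rw [show (fun y : ↥uA => proj (y : ES d))
                  = proj ∘ (fun y : ↥uA => (y : ES d)) from rfl,
                Set.range_comp]
              rw [show Set.range (fun y : ↥uA => (y : ES d)) = (↑uA : Set (ES d))
                from Subtype.range_coe]
            have hw' : ∑ y ∈ uA.attach, w (y : ES d) = 0 := by
              rw [Finset.sum_attach uA (fun y => w y)]; exact hσ
            have := weightedVSub_mem_vectorSpan (s := uA.attach) hw'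
              (fun y : ↥uA => proj (y : ES d))
            rw [hrange] at this
            have heq : uA.attach.weightedVSub (fun y : ↥uA => proj (y : ES d))
                (fun y : ↥uA => w (y : ES d)) = v := by
              rw [Finset.weightedVSub_eq_linear_combination _ hw']
              rw [hvdef, Finset.sum_attach uA (fun y => w y • proj y)]
            rw [heq] at this
            exact this
          have hvB : v ∈ vectorSpan ℝ (proj '' (↑uB : Set (ES d))) := by
            have hrange : Set.range (fun y : ↥uB => proj (y : ES d))
                = proj '' (↑uB : Set (ES d)) := by
              rw [show (fun y : ↥uB => proj (y : ES d))
                  = proj ∘ (fun y : ↥uB => (y : ES d)) from rfl,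
                Set.range_comp]
              rw [show Set.range (fun y : ↥uB => (y : ES d)) = (↑uB : Set (ES d))
                from Subtype.range_coe]
            have hsB : ∑ y ∈ uB, w y = 0 := by linarith [hsum_split, hσ]
            have hw' : ∑ y ∈ uB.attach, (- w (y : ES d)) = 0 := by
              rw [Finset.sum_attach uB (fun y => - w y), Finset.sum_neg_distrib, hsB, neg_zero]
            have := weightedVSub_mem_vectorSpan (s := uB.attach) hw'
              (fun y : ↥uB => proj (y : ES d))
            rw [hrange] at this
            have heq : uB.attach.weightedVSub (fun y : ↥uB => proj (y : ES d))
                (fun y : ↥uB => - w (y : ES d)) = v := by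
              rw [Finset.weightedVSub_eq_linear_combination _ hw']
              rw [Finset.sum_attach uB (fun y => - w y • proj y)]
              have : ∑ y ∈ uB, -w y • proj y = - ∑ y ∈ uB, w y • proj y := by
                rw [← Finset.sum_neg_distrib]
                exact Finset.sum_congr rfl fun y _ => by rw [neg_smul]
              rw [this]
              exact neg_eq_of_add_eq_zero_left hproj_split
            rw [heq] at this
            exact this
          have hq1' : v +ᵥ q ∈ affineSpan ℝ (proj '' (↑uA : Set (ES d))) :=
            AffineSubspace.vadd_mem_of_mem_direction
              (by rw [direction_affineSpan]; exact hvA) hq1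
          have hq2' : v +ᵥ q ∈ affineSpan ℝ (proj '' (↑uB : Set (ES d))) :=
            AffineSubspace.vadd_mem_of_mem_direction
              (by rw [direction_affineSpan]; exact hvB) hq2
          have := huniq (v +ᵥ q) ⟨hq1', hq2'⟩
          apply hv
          have hvq : v + q = q := this
          exact add_eq_right.mp hvq
      · -- σ ≠ 0 : HighAbove contradiction
        have hSB : ∑ y ∈ uB, w y = -σ := by linarith [hsum_split]
        set X : ES d := σ⁻¹ • ∑ y ∈ uA, w y • y with hXdef
        have hXA : X ∈ affineSpan ℝ (↑uA : Set (ES d)) := by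
          have hw' : ∑ y ∈ uA.attach, (σ⁻¹ * w (y : ES d)) = 1 := by
            rw [Finset.sum_attach uA (fun y => σ⁻¹ * w y), ← Finset.mul_sum, ← hσdef,
              inv_mul_cancel₀ hσ]
          have hmem := affineCombination_mem_affineSpan hw' (fun y : ↥uA => (y : ES d))
          have hrange : Set.range (fun y : ↥uA => (y : ES d)) = (↑uA : Set (ES d)) :=
            Subtype.range_coe
          rw [hrange] at hmem
          have heq : (Finset.affineCombination ℝ uA.attach (fun y : ↥uA => (y : ES d)))
              (fun y : ↥uA => σ⁻¹ * w (y : ES d)) = X := by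
            rw [Finset.affineCombination_eq_linear_combination _ _ _ hw']
            rw [Finset.sum_attach uA (fun y => (σ⁻¹ * w y) • y), hXdef, Finset.smul_sum]
            exact Finset.sum_congr rfl fun y _ => by rw [smul_smul]
          rw [heq] at hmem
          exact hmem
        have hXB : X ∈ affineSpan ℝ (↑uB : Set (ES d)) := by
          have hτ : (-σ) ≠ 0 := neg_ne_zero.mpr hσ
          have hw' : ∑ y ∈ uB.attach, ((-σ)⁻¹ * w (y : ES d)) = 1 := by
            rw [Finset.sum_attach uB (fun y => (-σ)⁻¹ * w y), ← Finset.mul_sum, hSB,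
              inv_mul_cancel₀ hτ]
          have hmem := affineCombination_mem_affineSpan hw' (fun y : ↥uB => (y : ES d))
          have hrange : Set.range (fun y : ↥uB => (y : ES d)) = (↑uB : Set (ES d)) :=
            Subtype.range_coe
          rw [hrange] at hmem
          have heq : (Finset.affineCombination ℝ uB.attach (fun y : ↥uB => (y : ES d)))
              (fun y : ↥uB => (-σ)⁻¹ * w (y : ES d)) = X := by
            rw [Finset.affineCombination_eq_linear_combination _ _ _ hw']
            rw [Finset.sum_attach uB (fun y => ((-σ)⁻¹ * w y) • y)]
            have h1 : ∑ y ∈ uB, ((-σ)⁻¹ * w y) • y = (-σ)⁻¹ • ∑ y ∈ uB, w y • y := by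
              rw [Finset.smul_sum]
              exact Finset.sum_congr rfl fun y _ => by rw [smul_smul]
            have h2 : ∑ y ∈ uB, w y • y = - ∑ y ∈ uA, w y • y :=
              eq_neg_of_add_eq_zero_right hvec_split
            rw [h1, h2, hXdef]
            rw [smul_neg, ← neg_smul, neg_inv, neg_neg]
          rw [heq] at hmem
          exact hmem
        rcases hab with hAB | hBA
        · exact absurd rfl (ne_of_gt (hAB.2.2 uA uB huAsubA huBsubB hA0 hB0 hcard_split
            X X hXA hXB rfl)).symm
        · exact absurd rfl (ne_of_gt (hBA.2.2 uB uA huBsubB huAsubA hB0 hA0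
            (by omega) X X hXB hXA rfl)).symm

end oscnodep
section partB
variable {d : ℕ}

lemma regular_subset {P Q : Set (ES d)} (hreg : Regular P) (hQ : Q ⊆ P) : Regular Q :=
  ⟨fun i => (hreg.1 i).mono hQ,
   fun s hs hc => hreg.2.1 s (hs.trans (Set.image_mono hQ)) hc,
   fun S T hS hT => hreg.2.2 S T (hS.trans hQ) (hT.trans hQ)⟩

lemma mem_hull_diff {C : Set (ES d)} {p x y : ES d} (hp : p ∈ C)
    (hx : x ∈ convexHull ℝ C) (hy : y ∈ convexHull ℝ C) {t : ℝ} (ht0 : 0 < t) (ht1 : t < 1)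
    (hpt : p = (1-t) • x + t • y) (hxp : x ≠ p) : p ∈ convexHull ℝ (C \ {p}) := by
  have hne : (C \ {p}).Nonempty := by
    by_contra hne
    rw [Set.not_nonempty_iff_eq_empty, Set.diff_eq_empty] at hne
    have : convexHull ℝ C ⊆ convexHull ℝ {p} := convexHull_mono hne
    rw [convexHull_singleton] at this
    exact hxp (this hx)
  have hCins : C = insert p (C \ {p}) := by
    rw [Set.insert_diff_singleton, Set.insert_eq_self.mpr hp]
  rw [hCins, convexHull_insert hne] at hx hy
  rw [mem_convexJoin] at hx hy
  obtain ⟨px, hpx, x', hx', hseg⟩ := hx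
  obtain ⟨py, hpy, y', hy', hseg'⟩ := hy
  rw [Set.mem_singleton_iff] at hpx hpy
  obtain ⟨α, α', hα0, hα'0, hαs, hxe⟩ := hseg
  obtain ⟨β, β', hβ0, hβ'0, hβs, hye⟩ := hseg'
  rw [hpx] at hxe
  rw [hpy] at hye
  set A := (1-t)*α' with hA
  set B := t*β' with hBd
  set w := A + B with hw
  have hA0 : 0 ≤ A := mul_nonneg (by linarith) hα'0
  have hB0 : 0 ≤ B := mul_nonneg (by linarith) hβ'0
  by_cases hw0 : w = 0
  · -- then α' = β' = 0 so x = p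
    have hA0' : A = 0 := by linarith [hA0, hB0]
    have hα'0' : α' = 0 := by
      rcases mul_eq_zero.mp hA0' with h | h
      · linarith
      · exact h
    exfalso
    apply hxp
    rw [← hxe, hα'0', zero_smul, add_zero, show α = 1 by linarith, one_smul]
  · have hwpos : 0 < w := lt_of_le_of_ne (by positivity) (Ne.symm hw0)
    have hs0 : (1-t)*α + t*β = 1 - w := by
      rw [hw, hA, hBd]; nlinarith [hαs, hβs]
    have hcomb : p = ((1-t)*α + t*β) • p + (A • x' + B • y') := by
      rw [hA, hBd]
      nth_rewrite 1 [hpt]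
      rw [← hxe, ← hye]
      module
    have hkey : w • p = A • x' + B • y' := by
      have h1 : p - ((1-t)*α + t*β) • p = A • x' + B • y' := by
        nth_rewrite 1 [hcomb]
        abel
      calc w • p = p - (1 - w) • p := by rw [sub_smul, one_smul]; abel
      _ = p - ((1-t)*α + t*β) • p := by rw [← hs0]
      _ = A • x' + B • y' := h1
    have hmem := (convex_convexHull ℝ (C \ {p})) hx' hy'
      (div_nonneg hA0 hwpos.le) (div_nonneg hB0 hwpos.le)
      (by field_simp; exact hw.symm)
    have hpe : p = (A/w) • x' + (B/w) • y' := by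
      have := congrArg (fun z => w⁻¹ • z) hkey
      simp only [smul_add, smul_smul, inv_smul_smul₀ hw0] at this
      rw [this]
      rw [div_eq_inv_mul, div_eq_inv_mul]
    nth_rewrite 2 [hpe]
    exact hmem

lemma low_or_high {C : Set (ES d)} (hd : 2 ≤ d) (hCI : ConvIndep C) :
    ∀ p ∈ C, (∀ x ∈ convexHull ℝ C, proj x = proj p → hCoord p ≤ hCoord x) ∨
             (∀ x ∈ convexHull ℝ C, proj x = proj p → hCoord x ≤ hCoord p) := by
  intro p hp
  by_contra hcon
  push_neg at hcon
  obtain ⟨⟨x, hx, hπx, hxlt⟩, ⟨y, hy, hπy, hylt⟩⟩ := hcon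
  set t := (hCoord p - hCoord x)/(hCoord y - hCoord x) with ht
  have hyx : 0 < hCoord y - hCoord x := by linarith
  have ht0 : 0 < t := div_pos (by linarith) hyx
  have ht1 : t < 1 := (div_lt_one hyx).mpr (by linarith)
  have hπc : proj ((1-t) • x + t • y) = proj p := by
    rw [proj_add, proj_smul, proj_smul, hπx, hπy, ← add_smul]
    rw [sub_add_cancel, one_smul]
  have hhc : hCoord ((1-t) • x + t • y) = hCoord p := by
    rw [hCoord_add (by omega), hCoord_smul (by omega), hCoord_smul (by omega), ht]
    field_simp
    ring
  have hpt : p = (1-t) • x + t • y := point_ext hd hπc.symm hhc.symm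
  have hxp : x ≠ p := fun h => by rw [h] at hxlt; exact lt_irrefl _ hxlt
  exact hCI.2 p hp (mem_hull_diff hp hx hy ht0 ht1 hpt hxp)

lemma low_cup (hd : 2 ≤ d) {P C C' : Set (ES d)} (hreg : Regular P) (hCP : C ⊆ P) (hC' : C' ⊆ C)
    (hCI : ConvIndep C)
    (hlow : ∀ p ∈ C', ∀ x ∈ convexHull ℝ C, proj x = proj p → hCoord p ≤ hCoord x) :
    ConvexCup C' := by
  constructor
  · exact regular_subset hreg (hC'.trans hCP)
  · intro p q c hp hq hqinj hpq hc hsum hπ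
    set z : ES d := ∑ i, c i • q i with hz
    have hzmem : z ∈ convexHull ℝ C := by
      have := Finset.centerMass_mem_convexHull (Finset.univ : Finset (Fin d))
        (w := c) (fun i _ => (hc i).1.le) (by rw [hsum]; exact one_pos)
        (z := q) (fun i _ => hC' (hq i))
      rwa [Finset.centerMass_eq_of_sum_1 _ _ hsum] at this
    have hπz : proj z = proj p := by
      rw [hπ, hz, proj_sum]
      exact Finset.sum_congr rfl fun i _ => proj_smul _ _
    have hzh : hCoord z = ∑ i, c i * hCoord (q i) := by
      rw [hz, hCoord_sum (by omega)]
      exact Finset.sum_congr rfl fun i _ => hCoord_smul (by omega) _ _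
    have hle : hCoord p ≤ hCoord z := hlow p hp z hzmem hπz
    rcases lt_or_eq_of_le hle with hlt | heq
    · rw [← hzh]; exact hlt
    · exfalso
      have hpz : p = z := point_ext hd hπz.symm heq
      apply hCI.2 p (hC' hp)
      have : z ∈ convexHull ℝ (C \ {p}) := by
        have := Finset.centerMass_mem_convexHull (Finset.univ : Finset (Fin d))
          (w := c) (fun i _ => (hc i).1.le) (by rw [hsum]; exact one_pos)
          (z := q) (fun i _ => Set.mem_diff_singleton.mpr
            ⟨hC' (hq i), fun hh => hpq i hh.symm⟩)
        rwa [Finset.centerMass_eq_of_sum_1 _ _ hsum] at this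
      rw [← hpz] at this
      exact this

lemma high_cap (hd : 2 ≤ d) {P C C' : Set (ES d)} (hreg : Regular P) (hCP : C ⊆ P) (hC' : C' ⊆ C)
    (hCI : ConvIndep C)
    (hhigh : ∀ p ∈ C', ∀ x ∈ convexHull ℝ C, proj x = proj p → hCoord x ≤ hCoord p) :
    ConvexCap C' := by
  constructor
  · exact regular_subset hreg (hC'.trans hCP)
  · intro p q c hp hq hqinj hpq hc hsum hπ
    set z : ES d := ∑ i, c i • q i with hz
    have hzmem : z ∈ convexHull ℝ C := by
      have := Finset.centerMass_mem_convexHull (Finset.univ : Finset (Fin d))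
        (w := c) (fun i _ => (hc i).1.le) (by rw [hsum]; exact one_pos)
        (z := q) (fun i _ => hC' (hq i))
      rwa [Finset.centerMass_eq_of_sum_1 _ _ hsum] at this
    have hπz : proj z = proj p := by
      rw [hπ, hz, proj_sum]
      exact Finset.sum_congr rfl fun i _ => proj_smul _ _
    have hzh : hCoord z = ∑ i, c i * hCoord (q i) := by
      rw [hz, hCoord_sum (by omega)]
      exact Finset.sum_congr rfl fun i _ => hCoord_smul (by omega) _ _
    have hle : hCoord z ≤ hCoord p := hhigh p hp z hzmem hπz
    rcases lt_or_eq_of_le hle with hlt | heq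
    · rw [← hzh]; exact hlt
    · exfalso
      have hpz : p = z := point_ext hd hπz.symm heq.symm
      apply hCI.2 p (hC' hp)
      have : z ∈ convexHull ℝ (C \ {p}) := by
        have := Finset.centerMass_mem_convexHull (Finset.univ : Finset (Fin d))
          (w := c) (fun i _ => (hc i).1.le) (by rw [hsum]; exact one_pos)
          (z := q) (fun i _ => Set.mem_diff_singleton.mpr
            ⟨hC' (hq i), fun hh => hpq i hh.symm⟩)
        rwa [Finset.centerMass_eq_of_sum_1 _ _ hsum] at this
      rw [← hpz] at this
      exact this

end partB
section partA
variable {d : ℕ}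

lemma osc_finite {d : ℕ} {P : Set (ES d)} (h : IsOscillator d P) : P.Finite := by
  induction h with
  | single p => exact Set.finite_singleton p
  | dimOne P hfin => exact hfin
  | step P hd hfin hcard hreg h1 h2 hab hproj ih1 ih2 ihproj => exact hfin

lemma hCoord_sub (hd : 0 < d) (x y : ES d) : hCoord (x - y) = hCoord x - hCoord y := by
  simp [hCoord_eq hd, PiLp.sub_apply]

lemma proj_sub (x y : ES d) : proj (x - y) = proj x - proj y := by
  rw [← projL_apply, map_sub]; rfl

lemma proj_single (hd : 2 ≤ d) (c : ℝ) :
    proj (EuclideanSpace.single (⟨d-1, by omega⟩ : Fin d) c) = 0 := by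
  ext i
  rw [proj_apply]
  rw [EuclideanSpace.single_apply]
  have : (Fin.castLE (Nat.sub_le d 1) i : Fin d) ≠ ⟨d-1, by omega⟩ := by
    intro hh
    have := i.isLt
    have h2 := congrArg Fin.val hh
    simp at h2
    omega
  simp [this]

lemma hCoord_single (hd : 2 ≤ d) (c : ℝ) :
    hCoord (EuclideanSpace.single (⟨d-1, by omega⟩ : Fin d) c) = c := by
  rw [hCoord_eq (by omega)]
  rw [EuclideanSpace.single_apply]
  simp

lemma cupcap_noMemHull {P C : Set (ES d)} (hd : 2 ≤ d) (hP : IsOscillator d P) (hCP : C ⊆ P)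
    (ε : ℝ) (hε : ε = 1 ∨ ε = -1)
    (hstrict : ∀ (p : ES d) (q : Fin d → ES d) (c : Fin d → ℝ), p ∈ C → (∀ i, q i ∈ C) →
      Function.Injective q → (∀ i, p ≠ q i) → (∀ i, c i ∈ Set.Ioo (0:ℝ) 1) → ∑ i, c i = 1 →
      proj p = ∑ i, c i • proj (q i) → ε * hCoord p < ∑ i, c i * (ε * hCoord (q i))) :
    ∀ p ∈ C, p ∉ convexHull ℝ (C \ {p}) := by
  classical
  have hPno : NoDep P (d+1) := oscNoDep hP
  intro p hp hmem
  -- dispose of the singleton oscillator case, getting regularity of P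
  have hreg : Regular P := by
    cases hP with
    | single pt =>
      exfalso
      have hppt : p = pt := hCP hp
      have : C \ {p} = ∅ := by
        apply Set.eq_empty_iff_forall_notMem.mpr
        intro y hy
        exact hy.2 (by rw [Set.mem_singleton_iff, hppt]; exact hCP hy.1)
      rw [this, convexHull_empty] at hmem
      exact hmem
    | dimOne P hfin => omega
    | step P hd2 hfin hcard hreg h1 h2 hab hproj => exact hreg
  have hπno : NoDep (proj '' P) d := by
    cases hP with
    | single pt =>
      intro s hs hc w h0 h1 x hx
      have hc1 : s.card ≤ 2 := by
        have : s.card ≤ 1 := Finset.card_le_one.mpr (fun a ha b hb => by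
          have ha' := hs ha
          have hb' := hs hb
          rw [Set.image_singleton, Set.mem_singleton_iff] at ha' hb'
          rw [ha', hb'])
        omega
      exact noDep_two s hc1 w h0 h1 x hx
    | dimOne P hfin => omega
    | step P hd2 hfin hcard hreg h1 h2 hab hproj =>
      have := oscNoDep hproj
      have hh : (d - 1) + 1 = d := by omega
      rw [hh] at this
      exact this
  have hinj : Set.InjOn proj P := proj_injOn hd hreg
  -- Caratheodory
  rw [convexHull_eq_union] at hmem
  simp only [Set.mem_iUnion] at hmem
  obtain ⟨t, hts, hai, hmemt⟩ := hmem
  have htP : ↑t ⊆ P := fun y hy => hCP (hts hy).1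
  have htcard : t.card ≤ d + 1 := by
    calc t.card = Fintype.card ↥(↑t : Set (ES d)) := (Fintype.card_coe t).symm
    _ ≤ Module.finrank ℝ (vectorSpan ℝ
          (Set.range (Subtype.val : ↥(↑t : Set (ES d)) → ES d))) + 1 :=
        hai.card_le_finrank_succ
    _ ≤ Module.finrank ℝ (ES d) + 1 := Nat.add_le_add_right (Submodule.finrank_le _) 1
    _ = d + 1 := by rw [finrank_euclideanSpace_fin]
  obtain ⟨w, hw0, hw1, hwc⟩ := Finset.mem_convexHull.mp hmemt
  set t₁ := t.filter (fun y => w y ≠ 0) with ht₁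
  have ht₁sub : t₁ ⊆ t := Finset.filter_subset _ t
  have ht₁C : ↑t₁ ⊆ C \ {p} := fun y hy => hts (ht₁sub hy)
  have ht₁P : ↑t₁ ⊆ P := fun y hy => htP (ht₁sub hy)
  have hnp : p ∉ t₁ := fun hh => (ht₁C hh).2 rfl
  have hw1' : ∑ y ∈ t₁, w y = 1 := by
    have heq : ∑ y ∈ t₁, w y = ∑ y ∈ t, w y := by
      rw [ht₁, Finset.sum_filter]
      apply Finset.sum_congr rfl
      intro y _
      split
      · rfl
      · next h => rw [not_not.mp h]
    rw [heq, hw1]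
  have hwpos : ∀ y ∈ t₁, 0 < w y := fun y hy =>
    lt_of_le_of_ne (hw0 y (ht₁sub hy)) (Ne.symm (Finset.mem_filter.mp hy).2)
  have hpsum : p = ∑ y ∈ t₁, w y • y := by
    rw [← hwc, Finset.centerMass_eq_of_sum_1 _ _ hw1]
    rw [ht₁, Finset.sum_filter]
    apply Finset.sum_congr rfl
    intro y _
    split
    · simp
    · next h => rw [not_not.mp h, zero_smul]
  rcases Nat.lt_or_ge t₁.card (d+1) with hlt | hge
  · -- small support: direct dependency
    set W : ES d → ℝ := fun y => if y = p then 1 else - w y with hW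
    have h0 : ∑ y ∈ insert p t₁, W y = 0 := by
      rw [Finset.sum_insert hnp, hW]
      simp only [if_pos rfl]
      have : ∑ y ∈ t₁, (if y = p then (1:ℝ) else - w y) = - ∑ y ∈ t₁, w y := by
        rw [← Finset.sum_neg_distrib]
        apply Finset.sum_congr rfl
        intro y hy
        rw [if_neg (fun hh => hnp (by rw [← hh]; exact hy))]
      rw [this, hw1']
      simp
    have h1 : ∑ y ∈ insert p t₁, W y • y = 0 := by
      rw [Finset.sum_insert hnp, hW]
      simp only [if_pos rfl, one_smul]
      have : ∑ y ∈ t₁, (if y = p then (1:ℝ) else - w y) • y = - ∑ y ∈ t₁, w y • y := by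
        rw [← Finset.sum_neg_distrib]
        apply Finset.sum_congr rfl
        intro y hy
        rw [if_neg (fun hh => hnp (by rw [← hh]; exact hy)), neg_smul]
      rw [this, ← hpsum]
      simp
    have := hPno (insert p t₁) (by
        intro y hy
        rcases Finset.mem_insert.mp (by exact_mod_cast hy) with rfl | hy'
        · exact hCP hp
        · exact ht₁P hy') (by
        have := Finset.card_insert_le p t₁
        omega) W h0 h1 p (Finset.mem_insert_self p t₁)
    rw [hW] at this
    simp at this
  · have ht₁card : t₁.card = d + 1 :=
      le_antisymm (le_trans (Finset.card_le_card ht₁sub) htcard) hge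
    -- affine basis from t₁
    have hai₁ : AffineIndependent ℝ (fun x : ↥t₁ => (x : ES d)) :=
      affineIndependent_of_noDep hPno t₁ ht₁P (le_of_eq ht₁card)
    have htop : affineSpan ℝ (Set.range (fun x : ↥t₁ => (x : ES d))) = ⊤ := by
      rw [hai₁.affineSpan_eq_top_iff_card_eq_finrank_add_one]
      rw [Fintype.card_coe, finrank_euclideanSpace_fin]
      exact ht₁card
    set b : AffineBasis ↥t₁ ℝ (ES d) := ⟨fun x => (x : ES d), hai₁, htop⟩ with hb
    -- the compact fiber
    set K : Set (ES d) := convexHull ℝ (↑t₁ : Set (ES d)) ∩ {x | proj x = proj p} with hK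
    have hclosed : IsClosed {x : ES d | proj x = proj p} := by
      have : {x : ES d | proj x = proj p} = (projL d) ⁻¹' {proj p} := rfl
      rw [this]
      exact IsClosed.preimage (projL d).continuous_of_finiteDimensional isClosed_singleton
    have hKcomp : IsCompact K :=
      ((t₁.finite_toSet).isCompact_convexHull ℝ).inter_right hclosed
    have hpK : p ∈ K := by
      constructor
      · rw [hpsum]
        have := Finset.centerMass_mem_convexHull t₁ (fun y hy => (hwpos y hy).le)
          (by rw [hw1']; exact one_pos) (z := id) (fun y hy => by
            exact Finset.mem_coe.mpr hy)
        rwa [Finset.centerMass_eq_of_sum_1 _ _ hw1'] at this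
      · rfl
    set g : ES d → ℝ := fun x => ε * hCoord x with hg
    have hgc : Continuous g := by
      have hh : g = fun x : ES d => ε * (EuclideanSpace.proj (⟨d-1, by omega⟩ : Fin d) x) := by
        funext x
        rw [hg]
        simp only
        rw [hCoord_eq_proj' (by omega)]
      rw [hh]
      exact continuous_const.mul (EuclideanSpace.proj _).continuous
    obtain ⟨z, hzK, hzmin⟩ := hKcomp.exists_isMinOn ⟨p, hpK⟩ hgc.continuousOn
    obtain ⟨γ, hγ0, hγ1, hγc⟩ := Finset.mem_convexHull.mp hzK.1
    have hzsum : z = ∑ y ∈ t₁, γ y • y := by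
      rw [← hγc, Finset.centerMass_eq_of_sum_1 _ _ hγ1]
      simp
    have hπz : proj z = proj p := hzK.2
    have hzh : hCoord z = ∑ y ∈ t₁, γ y * hCoord y := by
      rw [hzsum, hCoord_sum (by omega)]
      exact Finset.sum_congr rfl fun y _ => hCoord_smul (by omega) _ _
    have hπzsum : proj z = ∑ y ∈ t₁, γ y • proj y := by
      rw [hzsum, proj_sum]
      exact Finset.sum_congr rfl fun y _ => proj_smul _ _
    by_cases hall : ∀ y ∈ t₁, 0 < γ y
    · -- z is interior, contradict minimality
      have hcoordpos : ∀ i : ↥t₁, 0 < b.coord i z := by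
        intro i
        have hsum1 : ∑ i : ↥t₁, γ (i : ES d) = 1 := by
          rw [Finset.sum_coe_sort t₁ (fun y => γ y)]
          exact hγ1
        have hzc : z = (Finset.univ.affineCombination ℝ (b : ↥t₁ → ES d)) (fun i => γ (i : ES d)) := by
          rw [Finset.affineCombination_eq_linear_combination _ _ _ hsum1]
          rw [hzsum, ← Finset.sum_coe_sort t₁ (fun y => γ y • y)]
          rfl
        rw [hzc, b.coord_apply_combination_of_mem (Finset.mem_univ i) hsum1]
        exact hall _ i.2
      have hzint : z ∈ interior (convexHull ℝ (↑t₁ : Set (ES d))) := by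
        have hrange : Set.range (b : ↥t₁ → ES d) = (↑t₁ : Set (ES d)) := Subtype.range_coe
        rw [← hrange, b.interior_convexHull]
        exact hcoordpos
      obtain ⟨δ, hδ0, hball⟩ := Metric.isOpen_iff.mp isOpen_interior z hzint
      set e : ES d := EuclideanSpace.single (⟨d-1, by omega⟩ : Fin d) (1:ℝ) with he
      set z' : ES d := z - (δ/2 * ε) • e with hz'
      have hdist : dist z' z < δ := by
        rw [hz', dist_eq_norm]
        have : z - (δ/2 * ε) • e - z = -((δ/2 * ε) • e) := by abel
        rw [this, norm_neg, norm_smul, he, EuclideanSpace.norm_single]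
        have : ‖(1:ℝ)‖ = 1 := by simp
        rw [this, mul_one]
        have : ‖δ/2 * ε‖ = δ/2 := by
          rcases hε with rfl | rfl <;> simp [abs_of_pos, hδ0] <;> positivity
        rw [this]
        linarith
      have hz'K : z' ∈ K := by
        constructor
        · exact interior_subset (hball (Metric.mem_ball.mpr hdist))
        · show proj z' = proj p
          rw [hz', proj_sub, proj_smul, he, proj_single hd, smul_zero, sub_zero, hπz]
      have hgz' : g z' < g z := by
        rw [hg]
        simp only
        rw [hz', hCoord_sub (by omega), hCoord_smul (by omega), he, hCoord_single hd]
        have hε2 : ε * ε = 1 := by rcases hε with rfl | rfl <;> norm_num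
        have : ε * (hCoord z - δ/2 * ε * 1) = ε * hCoord z - δ/2 * (ε * ε) := by ring
        rw [this, hε2]
        linarith
      exact absurd (hzmin hz'K) (not_le.mpr hgz')
    · -- some zero coordinate: z lies on a lower facet
      push_neg at hall
      obtain ⟨j0, hj0t, hj0le⟩ := hall
      have hj0 : γ j0 = 0 := le_antisymm hj0le (hγ0 j0 hj0t)
      set F := t₁.erase j0 with hF
      have hFcard : F.card = d := by
        rw [hF, Finset.card_erase_of_mem hj0t, ht₁card]
        omega
      have hFsum : ∑ y ∈ F, γ y = 1 := by
        rw [hF]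
        rw [← hγ1]
        rw [← Finset.add_sum_erase t₁ γ hj0t, hj0, zero_add]
      have hFz : ∑ y ∈ F, γ y • y = z := by
        rw [hF, hzsum, ← Finset.add_sum_erase t₁ (fun y => γ y • y) hj0t, hj0, zero_smul, zero_add]
      have hFπ : ∑ y ∈ F, γ y • proj y = proj p := by
        rw [hF, ← hπz, hπzsum, ← Finset.add_sum_erase t₁ (fun y => γ y • proj y) hj0t, hj0,
          zero_smul, zero_add]
      have hFh : ∑ y ∈ F, γ y * hCoord y = hCoord z := by
        rw [hF, hzh, ← Finset.add_sum_erase t₁ (fun y => γ y * hCoord y) hj0t, hj0, zero_mul,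
          zero_add]
      by_cases hallF : ∀ y ∈ F, 0 < γ y
      · -- cup/cap condition violated
        have hlt1 : ∀ y ∈ F, γ y < 1 := by
          intro y hy
          obtain ⟨y', hy', hyy'⟩ : ∃ y' ∈ F, y' ≠ y := by
            by_contra hcon
            push_neg at hcon
            have : F ⊆ {y} := fun a ha => Finset.mem_singleton.mpr (hcon a ha)
            have := Finset.card_le_card this
            rw [hFcard, Finset.card_singleton] at this
            omega
          have h1 : γ y + γ y' ≤ ∑ a ∈ F, γ a := by
            rw [← Finset.add_sum_erase F γ hy]
            have : γ y' ≤ ∑ a ∈ F.erase y, γ a :=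
              Finset.single_le_sum (fun a ha => (hallF a (Finset.mem_of_mem_erase ha)).le)
                (Finset.mem_erase.mpr ⟨hyy', hy'⟩)
            linarith
          rw [hFsum] at h1
          have := hallF y' hy'
          linarith
        set eq : Fin d ≃ ↥F := (finCongr hFcard.symm).trans F.equivFin.symm with heq
        set q : Fin d → ES d := fun i => (eq i : ES d) with hq
        set c : Fin d → ℝ := fun i => γ (q i) with hc
        have hqF : ∀ i, q i ∈ F := fun i => (eq i).2
        have hqinj : Function.Injective q :=
          Subtype.coe_injective.comp (Equiv.injective eq)
        have hsum_reindex : ∀ f : ES d → ℝ, ∑ i, f (q i) = ∑ y ∈ F, f y := by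
          intro f
          rw [← Finset.sum_coe_sort F f]
          exact Equiv.sum_comp eq (fun y : ↥F => f (y : ES d))
        have hsum_reindexV : ∀ f : ES d → ES (d-1), ∑ i, γ (q i) • f (q i) = ∑ y ∈ F, γ y • f y := by
          intro f
          rw [← Finset.sum_coe_sort F (fun y => γ y • f y)]
          exact Equiv.sum_comp eq (fun y : ↥F => γ (y : ES d) • f (y : ES d))
        have hcs : ∑ i, c i = 1 := by
          rw [hc]
          simp only
          rw [hsum_reindex γ, hFsum]
        have hπp : proj p = ∑ i, c i • proj (q i) := by
          rw [hc]
          simp only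
          rw [hsum_reindexV proj, hFπ]
        have hioo : ∀ i, c i ∈ Set.Ioo (0:ℝ) 1 :=
          fun i => ⟨hallF _ (hqF i), hlt1 _ (hqF i)⟩
        have hpq : ∀ i, p ≠ q i := by
          intro i hh
          exact (ht₁C (Finset.mem_of_mem_erase (hqF i))).2
            (Set.mem_singleton_iff.mpr hh.symm)
        have hqC : ∀ i, q i ∈ C := fun i => (ht₁C (Finset.mem_of_mem_erase (hqF i))).1
        have hmain := hstrict p q c hp hqC hqinj hpq hioo hcs hπp
        have hrhs : ∑ i, c i * (ε * hCoord (q i)) = ε * hCoord z := by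
          have : ∑ i, c i * (ε * hCoord (q i)) = ε * ∑ i, c i * hCoord (q i) := by
            rw [Finset.mul_sum]
            exact Finset.sum_congr rfl fun i _ => by ring
          rw [this]
          congr 1
          rw [hc]
          simp only
          rw [show ∑ i, γ (q i) * hCoord (q i) = ∑ y ∈ F, γ y * hCoord y from by
            rw [← Finset.sum_coe_sort F (fun y => γ y * hCoord y)]
            exact Equiv.sum_comp eq (fun y : ↥F => γ (y : ES d) * hCoord (y : ES d))]
          rw [hFh]
        rw [hrhs] at hmain
        have hmin : g z ≤ g p := hzmin hpK
        rw [hg] at hmin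
        simp only at hmin
        linarith
      · -- a second zero: small projected dependency
        push_neg at hallF
        obtain ⟨y0, hy0F, hy0le⟩ := hallF
        have hy00 : γ y0 = 0 :=
          le_antisymm hy0le (hγ0 y0 (Finset.mem_of_mem_erase hy0F))
        set G := F.filter (fun y => γ y ≠ 0) with hG
        have hGF : G ⊆ F := Finset.filter_subset _ F
        have hGcard : G.card ≤ d - 1 := by
          have hsub : G ⊆ F.erase y0 := by
            intro y hy
            rcases Finset.mem_filter.mp hy with ⟨hyF, hyne⟩
            exact Finset.mem_erase.mpr ⟨fun hh => hyne (by rw [hh]; exact hy00), hyF⟩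
          have := Finset.card_le_card hsub
          rw [Finset.card_erase_of_mem hy0F, hFcard] at this
          exact this
        have hGsum : ∑ y ∈ G, γ y = 1 := by
          have heq : ∑ y ∈ G, γ y = ∑ y ∈ F, γ y := by
            rw [hG, Finset.sum_filter]
            apply Finset.sum_congr rfl
            intro y _
            split
            · rfl
            · next h => rw [not_not.mp h]
          rw [heq, hFsum]
        have hGπ : ∑ y ∈ G, γ y • proj y = proj p := by
          rw [← hFπ, hG, Finset.sum_filter]
          apply Finset.sum_congr rfl
          intro y _
          split
          · rfl
          · next h => rw [not_not.mp h, zero_smul]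
        -- build the projected dependency
        have hGinj : ∀ a ∈ G, ∀ b' ∈ G, proj a = proj b' → a = b' := by
          intro a ha b' hb' hab
          exact hinj (ht₁P (Finset.mem_of_mem_erase (hGF ha)))
            (ht₁P (Finset.mem_of_mem_erase (hGF hb'))) hab
        set Γ : ES (d-1) → ℝ := fun y => ∑ x ∈ G, if proj x = y then γ x else 0 with hΓ
        have hΓval : ∀ a ∈ G, Γ (proj a) = γ a := indicator_weight G proj hGinj γ
        set W : ES (d-1) → ℝ := fun y => if y = proj p then 1 else - Γ y with hWd
        have hpnotin : proj p ∉ G.image proj := by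
          intro hh
          obtain ⟨x, hxG, hxp⟩ := Finset.mem_image.mp hh
          have hxC : x ∈ C \ {p} := ht₁C (Finset.mem_of_mem_erase (hGF hxG))
          exact hxC.2 (hinj (htP (ht₁sub (Finset.mem_of_mem_erase (hGF hxG)))) (hCP hp) hxp)
        have h0 : ∑ y ∈ insert (proj p) (G.image proj), W y = 0 := by
          rw [Finset.sum_insert hpnotin, hWd]
          simp only [if_pos rfl]
          have : ∑ y ∈ G.image proj, (if y = proj p then (1:ℝ) else - Γ y)
              = - ∑ y ∈ G, γ y := by
            rw [Finset.sum_image hGinj, ← Finset.sum_neg_distrib]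
            apply Finset.sum_congr rfl
            intro y hy
            rw [if_neg (fun hh => hpnotin (by rw [← hh]; exact Finset.mem_image_of_mem proj hy)),
              hΓval y hy]
          rw [this, hGsum]
          simp
        have h1 : ∑ y ∈ insert (proj p) (G.image proj), W y • y = 0 := by
          rw [Finset.sum_insert hpnotin, hWd]
          simp only [if_pos rfl, one_smul]
          have : ∑ y ∈ G.image proj, (if y = proj p then (1:ℝ) else - Γ y) • y
              = - ∑ y ∈ G, γ y • proj y := by
            rw [Finset.sum_image hGinj, ← Finset.sum_neg_distrib]
            apply Finset.sum_congr rfl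
            intro y hy
            rw [if_neg (fun hh => hpnotin (by rw [← hh]; exact Finset.mem_image_of_mem proj hy)),
              hΓval y hy, neg_smul]
          rw [this, hGπ]
          simp
        have hsubP : ↑(insert (proj p) (G.image proj)) ⊆ proj '' P := by
          intro y hy
          rcases Finset.mem_insert.mp (by exact_mod_cast hy) with rfl | hy'
          · exact ⟨p, hCP hp, rfl⟩
          · obtain ⟨x, hxG, rfl⟩ := Finset.mem_image.mp hy'
            exact ⟨x, ht₁P (Finset.mem_of_mem_erase (hGF hxG)), rfl⟩
        have hcard : (insert (proj p) (G.image proj)).card ≤ d := by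
          have h1 := Finset.card_insert_le (proj p) (G.image proj)
          have h2 := Finset.card_image_le (f := proj) (s := G)
          omega
        have := hπno _ hsubP hcard W h0 h1 (proj p)
          (Finset.mem_insert_self _ _)
        rw [hWd] at this
        simp at this

end partA
section final
variable {d : ℕ}

lemma cupCap_convIndep {P C : Set (ES d)} (hd : 2 ≤ d) (hP : IsOscillator d P) (hCP : C ⊆ P)
    (hcc : ConvexCup C ∨ ConvexCap C) : ConvIndep C := by
  constructor
  · intro s hs hc
    exact affineIndependent_of_noDep (oscNoDep hP) s (hs.trans hCP) (le_of_eq hc)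
  · rcases hcc with hcup | hcap
    · apply cupcap_noMemHull hd hP hCP 1 (Or.inl rfl)
      intro p q c hp hq hqinj hpq hioo hcs hπ
      have := hcup.2 p q c hp hq hqinj hpq hioo hcs hπ
      have heq : ∑ i, c i * (1 * hCoord (q i)) = ∑ i, c i * hCoord (q i) :=
        Finset.sum_congr rfl fun i _ => by ring
      rw [one_mul, heq]
      exact this
    · apply cupcap_noMemHull hd hP hCP (-1) (Or.inr rfl)
      intro p q c hp hq hqinj hpq hioo hcs hπ
      have := hcap.2 p q c hp hq hqinj hpq hioo hcs hπ
      have heq : ∑ i, c i * ((-1) * hCoord (q i)) = - ∑ i, c i * hCoord (q i) := by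
        rw [← Finset.sum_neg_distrib]
        exact Finset.sum_congr rfl fun i _ => by ring
      rw [heq]
      linarith

lemma singleton_regular (hd : 2 ≤ d) (p : ES d) : Regular {p} := by
  refine ⟨fun i a ha b hb _ => by rw [Set.eq_of_mem_singleton ha, Set.eq_of_mem_singleton hb],
    ?_, ?_⟩
  · intro s hs hc
    exfalso
    rw [Set.image_singleton] at hs
    have : s.card ≤ 1 := Finset.card_le_one.mpr (fun a ha b hb => by
      rw [Set.eq_of_mem_singleton (hs ha), Set.eq_of_mem_singleton (hs hb)])
    omega
  · intro S T hS hT hdisj hSne hTne hcard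
    exfalso
    obtain ⟨a, ha⟩ := hSne
    obtain ⟨b, hb⟩ := hTne
    have ha' : a = p := Set.eq_of_mem_singleton (hS ha)
    have hb' : b = p := Set.eq_of_mem_singleton (hT hb)
    exact Finset.disjoint_left.mp hdisj ha (by rw [ha', ← hb']; exact hb)

lemma singleton_cup (hd : 2 ≤ d) (p : ES d) : ConvexCup {p} := by
  refine ⟨singleton_regular hd p, ?_⟩
  intro q qs c hq hqs hinj hne hioo hsum hπ
  exfalso
  have h0 : qs ⟨0, by omega⟩ = p := Set.eq_of_mem_singleton (hqs ⟨0, by omega⟩)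
  have hq' : q = p := Set.eq_of_mem_singleton hq
  exact hne ⟨0, by omega⟩ (by rw [hq', h0])

lemma exists_cupcap {k : ℕ} (hd : 2 ≤ d) {P C : Set (ES d)} (hP : IsOscillator d P)
    (hCP : C ⊆ P) (hCI : ConvIndep C) (hk : C.ncard = k) (hk1 : 1 ≤ k) :
    ∃ C' : Set (ES d), C' ⊆ C ∧ (ConvexCup C' ∨ ConvexCap C') ∧ C'.ncard = (k+1)/2 ∧
      C'.Nonempty := by
  classical
  have hfin : C.Finite := (osc_finite hP).subset hCP
  have hreg : Regular P := by
    cases hP with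
    | single pt => exact singleton_regular hd pt
    | dimOne P hfin2 => omega
    | step P hd2 hfin2 hcard hreg h1 h2 hab hproj => exact hreg
  set Low := {p ∈ C | ∀ x ∈ convexHull ℝ C, proj x = proj p → hCoord p ≤ hCoord x} with hLow
  set High := {p ∈ C | ∀ x ∈ convexHull ℝ C, proj x = proj p → hCoord x ≤ hCoord p} with hHigh
  have hcover : C ⊆ Low ∪ High := by
    intro p hp
    rcases low_or_high hd hCI p hp with h | h
    · exact Or.inl ⟨hp, h⟩
    · exact Or.inr ⟨hp, h⟩
  have hLC : Low ⊆ C := fun p hp => hp.1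
  have hHC : High ⊆ C := fun p hp => hp.1
  have hcardLH : k ≤ Low.ncard + High.ncard := by
    calc k = C.ncard := hk.symm
    _ ≤ (Low ∪ High).ncard :=
        Set.ncard_le_ncard hcover ((hfin.subset hLC).union (hfin.subset hHC))
    _ ≤ Low.ncard + High.ncard := Set.ncard_union_le _ _
  by_cases hwhich : (k+1)/2 ≤ Low.ncard
  · obtain ⟨C', hC'L, hC'card⟩ := Set.exists_subset_card_eq hwhich
    refine ⟨C', hC'L.trans hLC, Or.inl ?_, hC'card, ?_⟩
    · exact low_cup hd hreg hCP (hC'L.trans hLC) hCI (fun p hp => (hC'L hp).2)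
    · apply Set.nonempty_of_ncard_ne_zero
      rw [hC'card]
      omega
  · have hH : (k+1)/2 ≤ High.ncard := by omega
    obtain ⟨C', hC'H, hC'card⟩ := Set.exists_subset_card_eq hH
    refine ⟨C', hC'H.trans hHC, Or.inr ?_, hC'card, ?_⟩
    · exact high_cap hd hreg hCP (hC'H.trans hHC) hCI (fun p hp => (hC'H hp).2)
    · apply Set.nonempty_of_ncard_ne_zero
      rw [hC'card]
      omega

lemma stretch_mono {P C C' : Set (ES d)} (hfin : C.Finite) (h' : C' ⊆ C)
    (hne : C'.Nonempty) : stretch P C' ≤ stretch P C := by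
  unfold stretch
  have himg : rank P '' C' ⊆ rank P '' C := Set.image_mono h'
  have hbdd : BddAbove (rank P '' C) := (hfin.image _).bddAbove
  have h1 : sSup (rank P '' C') ≤ sSup (rank P '' C) :=
    csSup_le_csSup hbdd (hne.image _) himg
  have h2 : sInf (rank P '' C) ≤ sInf (rank P '' C') :=
    csInf_le_csInf (OrderBot.bddBelow _) (hne.image _) himg
  omega

end final
theorem stmt14 (d k : ℕ) (hd : 2 ≤ d) (hk : 1 ≤ k) :
    Delta' d ((k + 1) / 2) ≤ Delta d k ∧ Delta d k ≤ Delta' d k := by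
  constructor
  · apply le_sInf
    rintro s ⟨P, C, hP, hCP, hCI, hkC, rfl⟩
    obtain ⟨C', hC'C, hcc, hcard, hne⟩ := exists_cupcap hd hP hCP hCI hkC hk
    have h1 : Delta' d ((k+1)/2) ≤ (stretch P C' : ℝ≥0∞) :=
      sInf_le ⟨P, C', hP, hC'C.trans hCP, hcc, hcard, rfl⟩
    refine h1.trans ?_
    have hmono := stretch_mono (P := P) ((osc_finite hP).subset hCP) hC'C hne
    exact_mod_cast Nat.cast_le.mpr hmono
  · apply le_sInf
    rintro s ⟨P, C, hP, hCP, hcc, hkC, rfl⟩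
    exact sInf_le ⟨P, C, hP, hCP, cupCap_convIndep hd hP hCP hcc, hkC, rfl⟩
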